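/- The heuristic greedy solution is always feasible for the ILP with pruning constraints (5g) at any threshold θ ≥ 1, i.e., the warm start satisfies all constraints; consequently the optimal value of the pruned ILP is at most the heuristic DAG cost. -/
import Mathlib


/-- A valid extraction with respect to the set `kept` of allowed e-nodes: one e-node is
selected per activated e-class, every selected e-node belongs to its class and to `kept`,
all roots are activated, children classes of selected e-nodes are activated, and the
induced dependency graph on e-classes is acyclic (witnessed by a rank function). -/
def Valid {V C : Type*} (cl : V → C) (children : V → Finset C) (roots : Finset C)
    (kept : Set V) (sel : C → V) (act : Finset C) : Prop :=
  roots ⊆ act ∧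
  (∀ c ∈ act, cl (sel c) = c ∧ sel c ∈ kept ∧ children (sel c) ⊆ act) ∧
  ∃ r : C → ℕ, ∀ c ∈ act, ∀ k ∈ children (sel c), k ≠ c → r k < r c

/-- DAG cost of an extraction: sum of node costs of the distinct selected e-nodes
(one per activated class). -/
def DagCost {V C : Type*} (cost : V → ℕ) (sel : C → V) (act : Finset C) : ℕ :=
  ∑ c ∈ act, cost (sel c)

/-- Optimal DAG cost over extractions using only e-nodes in `kept` (`⊤` if none exists). -/
noncomputable def OptCost {V C : Type*} (cl : V → C) (children : V → Finset C)
    (roots : Finset C) (cost : V → ℕ) (kept : Set V) : ℕ∞ :=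
  sInf {x : ℕ∞ | ∃ sel act, Valid cl children roots kept sel act ∧
    x = (DagCost cost sel act : ℕ∞)}

/-- E-nodes kept by pruning at threshold `θ`: those whose heuristic cost is at most
`θ` times the heuristic cost of every e-node of the same class (equivalently, at most
`θ` times the class minimum). -/
def keptSet {V C : Type*} (cl : V → C) (h : V → ℕ) (θ : ℚ) : Set V :=
  {v | ∀ w, cl w = cl v → (h v : ℚ) ≤ θ * (h w : ℚ)}

/-- The heuristic greedy solution — a valid extraction whose selected
e-node in each activated class has minimal heuristic cost in its class — is feasible for
the pruned problem at any threshold `θ ≥ 1` (the warm start satisfies all constraints,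
including the pruning constraint 5g); consequently the optimal value of the pruned
problem is at most the heuristic DAG cost. -/
theorem warm_start_feasible_for_pruned_ilp {V C : Type*}
    (cl : V → C) (children : V → Finset C) (roots : Finset C)
    (cost h : V → ℕ) (θ : ℚ) (hθ : 1 ≤ θ)
    (selG : C → V) (actG : Finset C)
    (hvalid : Valid cl children roots Set.univ selG actG)
    (hmin : ∀ c ∈ actG, ∀ w : V, cl w = cl (selG c) → h (selG c) ≤ h w) :
    Valid cl children roots (keptSet cl h θ) selG actG ∧
    OptCost cl children roots cost (keptSet cl h θ) ≤ (DagCost cost selG actG : ℕ∞) := by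

  obtain ⟨hroots, hsel, hrank⟩ := hvalid
  have hv : Valid cl children roots (keptSet cl h θ) selG actG := by
    refine ⟨hroots, fun c hc => ⟨(hsel c hc).1, ?_, (hsel c hc).2.2⟩, hrank⟩
    intro w hw
    have h1 : (h (selG c) : ℚ) ≤ (h w : ℚ) := by
      exact_mod_cast hmin c hc w hw
    calc (h (selG c) : ℚ) ≤ (h w : ℚ) := h1
      _ = 1 * (h w : ℚ) := (one_mul _).symm
      _ ≤ θ * (h w : ℚ) := by
          apply mul_le_mul_of_nonneg_right hθ (by positivity)
  exact ⟨hv, sInf_le ⟨selG, actG, hv, rfl⟩⟩
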